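/- For every integer a ≥ 3 and x → ∞: Σ_{n ≤ x} τ_a(n) = (1/a) x log x + (γ - 1/a) x + O(x^{1 - 2/a} + x^{2/3 + ε}), where τ_a(n) is the number of divisors d of n with d^a ≤ n. -/

import Mathlib

open Filter Finset Real Topology



lemma telescope_Ico (g : ℕ → ℝ) {n m : ℕ} (h : n ≤ m) :
    ∑ k ∈ Finset.Ico n m, (g (k + 1) - g k) = g m - g n := by
  induction m, h using Nat.le_induction with
  | base => simp
  | succ m hm ih => rw [Finset.sum_Ico_succ_top hm, ih]; ring

lemma pow_sub_pow_bounds {u v : ℝ} (h0 : 0 ≤ u) (h : u ≤ v) (k : ℕ) :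
    (k : ℝ) * u ^ (k - 1) * (v - u) ≤ v ^ k - u ^ k ∧
      v ^ k - u ^ k ≤ (k : ℝ) * v ^ (k - 1) * (v - u) := by
  have hv : 0 ≤ v := h0.trans h
  induction k with
  | zero => simp
  | succ k ih =>
    obtain ⟨ih1, ih2⟩ := ih
    have hpk : u ^ k ≤ v ^ k := pow_le_pow_left₀ h0 h k
    constructor
    · have key : v ^ (k+1) - u ^ (k+1) = u * (v ^ k - u ^ k) + v ^ k * (v - u) := by ring
      rw [key]
      have h1 : u * ((k : ℝ) * u ^ (k-1) * (v - u)) ≤ u * (v ^ k - u ^ k) :=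
        mul_le_mul_of_nonneg_left ih1 h0
      have h2 : u * ((k : ℝ) * u ^ (k-1) * (v - u)) = (k : ℝ) * u ^ k * (v - u) := by
        cases k with
        | zero => simp
        | succ k => simp only [Nat.add_sub_cancel]; ring
      have h3 : u ^ k * (v - u) ≤ v ^ k * (v - u) :=
        mul_le_mul_of_nonneg_right hpk (by linarith)
      push_cast
      nlinarith [h1, h2, h3]
    · have key : v ^ (k+1) - u ^ (k+1) = v * (v ^ k - u ^ k) + u ^ k * (v - u) := by ring
      rw [key]
      have h1 : v * (v ^ k - u ^ k) ≤ v * ((k : ℝ) * v ^ (k-1) * (v - u)) :=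
        mul_le_mul_of_nonneg_left ih2 hv
      have h2 : v * ((k : ℝ) * v ^ (k-1) * (v - u)) = (k : ℝ) * v ^ k * (v - u) := by
        cases k with
        | zero => simp
        | succ k => simp only [Nat.add_sub_cancel]; ring
      have h3 : u ^ k * (v - u) ≤ v ^ k * (v - u) :=
        mul_le_mul_of_nonneg_right hpk (by linarith)
      push_cast
      nlinarith [h1, h2, h3]



lemma pointwise_bound (k : ℕ) (hk : 2 ≤ k) :
    |(Real.log (k+1) - Real.log k - 1/(k+1)) - (1/(2*(k:ℝ)) - 1/(2*((k:ℝ)+1)))| ≤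
      9 * (1/((k:ℝ)*(k+1)) - 1/(((k:ℝ)+1)*((k:ℝ)+2))) := by
  set K : ℝ := (k : ℝ) with hKdef
  have hK : (2:ℝ) ≤ K := by rw [hKdef]; exact_mod_cast hk
  have hK0 : (0:ℝ) < K := by linarith
  have hx : |(-(1/K))| < 1 := by
    rw [abs_neg, abs_of_pos (by positivity)]
    rw [div_lt_one hK0]; linarith
  have h := Real.abs_log_sub_add_sum_range_le hx 2
  have hsum : (∑ i ∈ range 2, (-(1/K)) ^ (i + 1) / (i + 1)) = -(1/K) + 1/(2*K^2) := by
    simp [Finset.sum_range_succ]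
    ring
  have hlog : Real.log (1 - (-(1/K))) = Real.log (K+1) - Real.log K := by
    rw [sub_neg_eq_add, ← Real.log_div (by positivity) (by positivity)]
    congr 1
    field_simp
  have habs : |(-(1/K))| = 1/K := by rw [abs_neg, abs_of_pos (by positivity)]
  rw [hsum, hlog, habs] at h
  have hK1 : K - 1 ≠ 0 := ne_of_gt (by linarith)
  have hB : (1/K) ^ (2+1) / (1 - 1/K) = 1/(K^2*(K-1)) := by
    rw [one_sub_div hK0.ne']
    rw [div_div_eq_mul_div]
    field_simp
    ring
    rw [← mul_pow, mul_inv_cancel₀ hK0.ne', one_pow]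
  rw [hB] at h
  have hdval : (1/(K+1) + (1/(2*K) - 1/(2*(K+1)))) - (1/K - 1/(2*K^2)) = 1/(2*K^2*(K+1)) := by
    field_simp
    ring
  have tri : |(Real.log (K+1) - Real.log K - 1/(K+1)) - (1/(2*K) - 1/(2*(K+1)))|
      ≤ 1/(K^2*(K-1)) + 1/(2*K^2*(K+1)) := by
    have e : (Real.log (K+1) - Real.log K - 1/(K+1)) - (1/(2*K) - 1/(2*(K+1)))
        = ((-(1/K) + 1/(2*K^2)) + (Real.log (K+1) - Real.log K))
          - ((1/(K+1) + (1/(2*K) - 1/(2*(K+1)))) - (1/K - 1/(2*K^2))) := by ring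
    rw [e, hdval]
    have t1 : |(-(1/K) + 1/(2*K^2) + (Real.log (K+1) - Real.log K)) - 1/(2*K^2*(K+1))|
        ≤ |(-(1/K) + 1/(2*K^2) + (Real.log (K+1) - Real.log K))| + |1/(2*K^2*(K+1))| :=
      abs_sub _ _
    have t2 : |1/(2*K^2*(K+1))| = 1/(2*K^2*(K+1)) := abs_of_pos (by positivity)
    rw [t2] at t1
    refine t1.trans ?_
    linarith
  refine tri.trans ?_
  have e2 : 9 * (1/(K*(K+1)) - 1/((K+1)*(K+2))) = 18 / (K*(K+1)*(K+2)) := by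
    field_simp
    ring
  rw [e2]
  have b1 : 1/(K^2*(K-1)) ≤ 2/K^3 := by
    rw [div_le_div_iff₀ (by nlinarith) (by positivity)]
    nlinarith
  have b2 : 1/(2*K^2*(K+1)) ≤ 1/K^3 := by
    rw [div_le_div_iff₀ (by positivity) (by positivity)]
    nlinarith
  have b3 : (3:ℝ)/K^3 ≤ 18/(K*(K+1)*(K+2)) := by
    rw [div_le_div_iff₀ (by positivity) (by positivity)]
    nlinarith
  have b4 : (2:ℝ)/K^3 + 1/K^3 = 3/K^3 := by ring
  linarith


lemma harmonic_est (n : ℕ) (hn : 2 ≤ n) :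
    |(harmonic n : ℝ) - Real.log n - Real.eulerMascheroniConstant - 1/(2*(n:ℝ))| ≤
      9/(n:ℝ)^2 := by
  have hnR : (2:ℝ) ≤ (n:ℝ) := by exact_mod_cast hn
  set g : ℕ → ℝ := fun k => ((harmonic k : ℝ) - Real.log k) - 1/(2*(k:ℝ)) with hg
  set q : ℕ → ℝ := fun k => -(9/((k:ℝ)*((k:ℝ)+1))) with hq
  have key : ∀ m, n ≤ m → |g n - g m| ≤ 9/(n:ℝ)^2 := by
    intro m hm
    have h1 : g m - g n = ∑ k ∈ Finset.Ico n m, (g (k+1) - g k) := (telescope_Ico g hm).symm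
    have h2 : |g n - g m| ≤ ∑ k ∈ Finset.Ico n m, |g (k+1) - g k| := by
      rw [abs_sub_comm, h1]
      exact Finset.abs_sum_le_sum_abs _ _
    have h3 : ∀ k ∈ Finset.Ico n m, |g (k+1) - g k| ≤ q (k+1) - q k := by
      intro k hk
      have hk2 : 2 ≤ k := hn.trans (Finset.mem_Ico.mp hk).1
      have hkR : (2:ℝ) ≤ (k:ℝ) := by exact_mod_cast hk2
      have hstep : g (k+1) - g k
          = -((Real.log (k+1) - Real.log k - 1/((k:ℝ)+1)) - (1/(2*(k:ℝ)) - 1/(2*((k:ℝ)+1)))) := by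
        simp only [hg]
        have hh : (harmonic (k+1) : ℝ) = (harmonic k : ℝ) + 1/((k:ℝ)+1) := by
          rw [harmonic_succ]
          push_cast
          ring
        rw [hh]
        push_cast
        ring
      rw [hstep, abs_neg]
      refine (pointwise_bound k hk2).trans (le_of_eq ?_)
      simp only [hq]
      push_cast
      ring
    have h4 : ∑ k ∈ Finset.Ico n m, |g (k+1) - g k| ≤ ∑ k ∈ Finset.Ico n m, (q (k+1) - q k) :=
      Finset.sum_le_sum h3
    have h5 : ∑ k ∈ Finset.Ico n m, (q (k+1) - q k) = q m - q n := telescope_Ico q hm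
    have h6 : q m - q n ≤ 9/(n:ℝ)^2 := by
      have hqm : q m ≤ 0 := by
        simp only [hq]
        have : (0:ℝ) ≤ (m:ℝ) := Nat.cast_nonneg m
        rw [neg_nonpos]
        positivity
      have hqn : -(q n) ≤ 9/(n:ℝ)^2 := by
        simp only [hq, neg_neg]
        rw [div_le_div_iff₀ (by positivity) (by positivity)]
        nlinarith
      have : q m - q n ≤ 0 - q n := by exact sub_le_sub_right hqm _
      have h7 : (0:ℝ) - q n = -(q n) := by ring
      rw [h7] at this
      exact this.trans hqn
    calc |g n - g m| ≤ ∑ k ∈ Finset.Ico n m, |g (k+1) - g k| := h2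
      _ ≤ ∑ k ∈ Finset.Ico n m, (q (k+1) - q k) := h4
      _ = q m - q n := h5
      _ ≤ 9/(n:ℝ)^2 := h6
  have hlim : Tendsto g atTop (𝓝 Real.eulerMascheroniConstant) := by
    have h0 : Tendsto (fun m : ℕ => 1/(2*(m:ℝ))) atTop (𝓝 0) := by
      simp only [one_div]
      exact ((tendsto_natCast_atTop_atTop (R := ℝ)).const_mul_atTop two_pos).inv_tendsto_atTop
    have h1 := Real.tendsto_harmonic_sub_log.sub h0
    rw [sub_zero] at h1
    exact h1
  have habs : Tendsto (fun m => |g n - g m|) atTop (𝓝 |g n - Real.eulerMascheroniConstant|) :=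
    ((tendsto_const_nhds.sub hlim).abs)
  have final : |g n - Real.eulerMascheroniConstant| ≤ 9/(n:ℝ)^2 := by
    refine le_of_tendsto habs ?_
    filter_upwards [eventually_ge_atTop n] with m hm
    exact key m hm
  refine le_of_eq_of_le ?_ final
  congr 1
  simp only [hg]
  ring


noncomputable def Cpow (p : ℕ) : ℝ :=
  ∑ i ∈ Finset.Ico 2 (p+1), |((bernoulli' i : ℚ) : ℝ)| * ((p+1).choose i) / (p+1)

lemma Cpow_nonneg (p : ℕ) : 0 ≤ Cpow p :=
  Finset.sum_nonneg fun i _ => by positivity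

lemma powsum_est (p : ℕ) (hp : 2 ≤ p) (N : ℕ) (hN : 1 ≤ N) :
    |∑ d ∈ Finset.Icc 1 N, (d:ℝ)^p - ((N:ℝ)^(p+1)/(p+1) + (N:ℝ)^p/2)| ≤
      Cpow p * (N:ℝ)^(p-1) := by
  have hq : (∑ k ∈ Finset.Ico 1 (N + 1), (k : ℚ) ^ p) =
      ∑ i ∈ Finset.range (p + 1), bernoulli' i * ((p + 1).choose i) * (N : ℚ) ^ (p + 1 - i) / (p + 1) :=
    sum_Ico_pow N p
  have hsplit : ∑ i ∈ Finset.range (p + 1),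
        bernoulli' i * ((p + 1).choose i) * (N : ℚ) ^ (p + 1 - i) / (p + 1)
      = (N : ℚ)^(p+1)/(p+1) + (N : ℚ)^p/2
        + ∑ i ∈ Finset.Ico 2 (p+1), bernoulli' i * ((p + 1).choose i) * (N : ℚ) ^ (p + 1 - i) / (p + 1) := by
    rw [Finset.range_eq_Ico, Finset.sum_eq_sum_Ico_succ_bot (by omega : 0 < p + 1),
      Finset.sum_eq_sum_Ico_succ_bot (by omega : 1 < p + 1)]
    rw [bernoulli'_zero, bernoulli'_one]
    have h1 : (1:ℚ) * ((p + 1).choose 0) * (N : ℚ) ^ (p + 1 - 0) / (p + 1) = (N:ℚ)^(p+1)/(p+1) := by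
      simp
    have hpne : ((p:ℚ) + 1) ≠ 0 := by positivity
    have h2 : (1/2:ℚ) * ((p + 1).choose 1) * (N : ℚ) ^ (p + 1 - 1) / (p + 1) = (N:ℚ)^p/2 := by
      rw [Nat.choose_one_right]
      simp only [Nat.add_sub_cancel]
      push_cast
      field_simp
    rw [h1, h2]
    ring
  have hcast : ∑ d ∈ Finset.Icc 1 N, (d:ℝ)^p = ((∑ k ∈ Finset.Ico 1 (N + 1), (k : ℚ) ^ p : ℚ) : ℝ) := by
    rw [Finset.Ico_add_one_right_eq_Icc]
    push_cast
    rfl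
  rw [hcast, hq, hsplit]
  push_cast
  rw [add_sub_cancel_left]
  refine (Finset.abs_sum_le_sum_abs _ _).trans ?_
  rw [Cpow, Finset.sum_mul]
  refine Finset.sum_le_sum fun i hi => ?_
  obtain ⟨hi2, hip⟩ := Finset.mem_Ico.mp hi
  have hNR : (1:ℝ) ≤ (N:ℝ) := by exact_mod_cast hN
  have hpow : (N:ℝ) ^ (p + 1 - i) ≤ (N:ℝ) ^ (p - 1) :=
    pow_le_pow_right₀ hNR (by omega)
  calc |((bernoulli' i : ℚ) : ℝ) * ((p + 1).choose i : ℝ) * (N : ℝ) ^ (p + 1 - i) / ((p:ℝ) + 1)|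
      = |((bernoulli' i : ℚ) : ℝ)| * ((p + 1).choose i : ℝ) * (N : ℝ) ^ (p + 1 - i) / ((p:ℝ) + 1) := by
        rw [abs_div, abs_mul, abs_mul,
          abs_of_nonneg (show (0:ℝ) ≤ ((p + 1).choose i : ℝ) by positivity),
          abs_of_nonneg (show (0:ℝ) ≤ (N:ℝ) ^ (p + 1 - i) by positivity),
          abs_of_nonneg (show (0:ℝ) ≤ (p:ℝ) + 1 by positivity)]
    _ ≤ |((bernoulli' i : ℚ) : ℝ)| * ((p + 1).choose i : ℝ) * (N : ℝ) ^ (p - 1) / ((p:ℝ) + 1) := by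
        gcongr
    _ = |((bernoulli' i : ℚ) : ℝ)| * ((p + 1).choose i : ℝ) / ((p:ℝ) + 1) * (N : ℝ) ^ (p - 1) := by
        ring


lemma comb_identity (a : ℕ) (ha : 1 ≤ a) (X : ℕ) :
    ∑ n ∈ Finset.Icc 1 X, ((n.divisors.filter (fun d => d ^ a ≤ n)).card)
      = ∑ d ∈ Finset.Icc 1 X, (X / d + 1 - d ^ (a - 1)) := by
  have step1 : ∀ n ∈ Finset.Icc 1 X,
      ((n.divisors.filter (fun d => d ^ a ≤ n)).card)
        = ((Finset.Icc 1 X).filter (fun d => d ∣ n ∧ d ^ a ≤ n)).card := by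
    intro n hn
    obtain ⟨hn1, hnX⟩ := Finset.mem_Icc.mp hn
    congr 1
    ext d
    simp only [Finset.mem_filter, Nat.mem_divisors, Finset.mem_Icc]
    constructor
    · rintro ⟨⟨hdvd, hne⟩, hpow⟩
      exact ⟨⟨Nat.pos_of_dvd_of_pos hdvd hn1, (Nat.le_of_dvd hn1 hdvd).trans hnX⟩, hdvd, hpow⟩
    · rintro ⟨⟨h1, h2⟩, hdvd, hpow⟩
      exact ⟨⟨hdvd, by omega⟩, hpow⟩
  rw [Finset.sum_congr rfl step1]
  have step2 : ∑ n ∈ Finset.Icc 1 X, ((Finset.Icc 1 X).filter (fun d => d ∣ n ∧ d ^ a ≤ n)).card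
      = ∑ d ∈ Finset.Icc 1 X, ((Finset.Icc 1 X).filter (fun n => d ∣ n ∧ d ^ a ≤ n)).card := by
    simp only [Finset.card_filter]
    exact Finset.sum_comm
  rw [step2]
  refine Finset.sum_congr rfl fun d hd => ?_
  obtain ⟨hd1, hdX⟩ := Finset.mem_Icc.mp hd
  have hd0 : 0 < d := hd1
  have hcard : ((Finset.Icc 1 X).filter (fun n => d ∣ n ∧ d ^ a ≤ n)).card
      = (Finset.Icc (d ^ (a-1)) (X / d)).card := by
    apply Finset.card_bij' (fun n _ => n / d) (fun m _ => d * m)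
    · intro n hn
      simp only [Finset.mem_filter, Finset.mem_Icc] at hn
      obtain ⟨⟨hn1, hnX⟩, hdvd, hpow⟩ := hn
      rw [Finset.mem_Icc]
      constructor
      · rw [Nat.le_div_iff_mul_le hd0]
        calc d ^ (a-1) * d = d ^ a := by
              rw [← pow_succ]
              congr 1
              omega
          _ ≤ n := hpow
      · exact Nat.div_le_div_right hnX
    · intro m hm
      rw [Finset.mem_Icc] at hm
      obtain ⟨hm1, hm2⟩ := hm
      have hd1m : 1 ≤ d ^ (a-1) := Nat.one_le_pow _ _ hd0
      simp only [Finset.mem_filter, Finset.mem_Icc]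
      refine ⟨⟨?_, ?_⟩, ⟨Dvd.intro m rfl, ?_⟩⟩
      · exact Nat.mul_pos hd0 (hd1m.trans hm1)
      · calc d * m = m * d := Nat.mul_comm d m
          _ ≤ X := (Nat.le_div_iff_mul_le hd0).mp hm2
      · calc d ^ a = d * d ^ (a-1) := by
              rw [← pow_succ']
              congr 1
              omega
          _ ≤ d * m := Nat.mul_le_mul_left d hm1
    · intro n hn
      simp only [Finset.mem_filter] at hn
      exact Nat.mul_div_cancel' hn.2.1
    · intro m hm
      exact Nat.mul_div_cancel_left m hd0
  rw [hcard, Nat.card_Icc]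

lemma truncate_sum (a : ℕ) (ha : 1 ≤ a) (X N : ℕ) (hNX : N ≤ X)
    (hN : ∀ d : ℕ, 1 ≤ d → (d ^ a ≤ X ↔ d ≤ N)) :
    ∑ d ∈ Finset.Icc 1 X, (X / d + 1 - d ^ (a - 1))
      = ∑ d ∈ Finset.Icc 1 N, (X / d + 1 - d ^ (a - 1)) := by
  symm
  apply Finset.sum_subset (Finset.Icc_subset_Icc_right hNX)
  intro d hd hnd
  rw [Finset.mem_Icc] at hd hnd
  have hd1 : 1 ≤ d := hd.1
  have hdN : ¬ d ≤ N := by tauto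
  have hpow : ¬ d ^ a ≤ X := fun h => hdN ((hN d hd1).mp h)
  have : X / d < d ^ (a-1) := by
    rw [Nat.div_lt_iff_lt_mul hd1]
    have : d ^ (a-1) * d = d ^ a := by
      rw [← pow_succ]; congr 1; omega
    omega
  omega



set_option maxHeartbeats 2000000 in
theorem stmt_12 (a : ℕ) (ha : 3 ≤ a) (ε : ℝ) (hε : 0 < ε) :
    (fun x : ℝ =>
        (∑ n ∈ Finset.Icc 1 ⌊x⌋₊, ((n.divisors.filter (fun d => d ^ a ≤ n)).card : ℝ)) -
          ((1 / (a : ℝ)) * x * Real.log x +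
            (Real.eulerMascheroniConstant - 1 / (a : ℝ)) * x)) =O[atTop]
      fun x : ℝ => x ^ (1 - 2 / (a : ℝ)) + x ^ ((2 : ℝ) / 3 + ε) := by
  have ha1 : 1 ≤ a := by omega
  have haR : (3:ℝ) ≤ (a:ℝ) := by exact_mod_cast ha
  have haR0 : (0:ℝ) < (a:ℝ) := by linarith
  set γ : ℝ := Real.eulerMascheroniConstant with hγ
  have hγ0 : 0 ≤ γ := by
    have := Real.one_half_lt_eulerMascheroniConstant
    rw [← hγ] at this
    linarith
  have hγ1 : γ ≤ 1 := by
    have := Real.eulerMascheroniConstant_lt_two_thirds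
    rw [← hγ] at this
    linarith
  rw [Asymptotics.isBigO_iff]
  refine ⟨36 + 2*(a:ℝ) + (a:ℝ)*2^(a-1) + Cpow (a-1) + 5, ?_⟩
  filter_upwards [eventually_ge_atTop ((2:ℝ)^a), eventually_ge_atTop 1] with x h2a hx1
  have hx0 : (0:ℝ) < x := by linarith
  set X : ℕ := ⌊x⌋₊ with hX
  set y : ℝ := x ^ ((a:ℝ)⁻¹) with hy
  set N : ℕ := ⌊y⌋₊ with hN
  have hy0 : 0 < y := Real.rpow_pos_of_pos hx0 _
  have hy2 : (2:ℝ) ≤ y := by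
    have h1 : ((2:ℝ)^a) ^ ((a:ℝ)⁻¹) ≤ x ^ ((a:ℝ)⁻¹) :=
      Real.rpow_le_rpow (by positivity) h2a (by positivity)
    rwa [Real.pow_rpow_inv_natCast (by norm_num) (by omega)] at h1
  have hya : y ^ a = x := Real.rpow_inv_natCast_pow hx0.le (by omega)
  have hNy : (N:ℝ) ≤ y := Nat.floor_le hy0.le
  have hyN1 : y < N + 1 := Nat.lt_floor_add_one y
  have hN2 : 2 ≤ N := Nat.le_floor (by exact_mod_cast hy2)
  have hN0R : (0:ℝ) < N := by
    have : (2:ℝ) ≤ (N:ℝ) := by exact_mod_cast hN2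
    linarith
  have hy2N : y ≤ 2*N := by
    have : (1:ℝ) ≤ (N:ℝ) := by linarith
    linarith
  have hXx : (X:ℝ) ≤ x := Nat.floor_le hx0.le
  have hxX1 : x < X + 1 := Nat.lt_floor_add_one x
  have hX1 : 1 ≤ X := Nat.le_floor (by exact_mod_cast hx1)
  have hdX : ∀ d : ℕ, 1 ≤ d → (d ^ a ≤ X ↔ d ≤ N) := by
    intro d hd
    rw [hX, hN, Nat.le_floor_iff hx0.le, Nat.le_floor_iff hy0.le]
    have h1 : ((d^a : ℕ) : ℝ) = ((d:ℝ))^a := by push_cast; rfl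
    rw [h1, ← hya]
    exact pow_le_pow_iff_left₀ (by positivity) hy0.le (by omega)
  have hNaX : N ^ a ≤ X := (hdX N (by omega)).mpr le_rfl
  have hNX : N ≤ X := le_trans (Nat.le_self_pow (by omega) N) hNaX
  have hXN1a : (X:ℝ) < ((N:ℝ)+1) ^ a := by
    by_contra hcon
    push_neg at hcon
    have h1 : ((N+1:ℕ):ℝ)^a ≤ (X:ℝ) := by push_cast; push_cast at hcon; linarith
    have h2 : ((((N+1):ℕ)^a : ℕ) : ℝ) ≤ (X:ℝ) := by push_cast; push_cast at h1; linarith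
    have h3 : (N+1)^a ≤ X := by exact_mod_cast h2
    have := (hdX (N+1) (by omega)).mp h3
    omega
  clear_value X y N
  -- sum decomposition
  set H : ℝ := ∑ d ∈ Finset.Icc 1 N, ((d:ℝ))⁻¹ with hHdef
  set R : ℝ := ∑ d ∈ Finset.Icc 1 N, ((X % d : ℕ):ℝ)/(d:ℝ) with hRdef
  set P : ℝ := ∑ d ∈ Finset.Icc 1 N, ((d:ℝ))^(a-1) with hPdef
  have hT : (∑ n ∈ Finset.Icc 1 X, ((n.divisors.filter (fun d => d ^ a ≤ n)).card : ℝ))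
      = (X:ℝ)*H - R + (N:ℝ) - P := by
    have e1 : (∑ n ∈ Finset.Icc 1 X, ((n.divisors.filter (fun d => d ^ a ≤ n)).card : ℝ))
        = ((∑ n ∈ Finset.Icc 1 X, (n.divisors.filter (fun d => d ^ a ≤ n)).card : ℕ) : ℝ) := by
      push_cast
      rfl
    rw [e1, comb_identity a ha1 X, truncate_sum a ha1 X N hNX hdX, Nat.cast_sum]
    have e2 : ∀ d ∈ Finset.Icc 1 N, ((X / d + 1 - d ^ (a - 1) : ℕ) : ℝ)
        = (X:ℝ)*(d:ℝ)⁻¹ - ((X % d : ℕ):ℝ)/(d:ℝ) + 1 - (d:ℝ)^(a-1) := by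
      intro d hd
      obtain ⟨hd1, hdN⟩ := Finset.mem_Icc.mp hd
      have hd0 : 0 < d := hd1
      have hdR : (0:ℝ) < (d:ℝ) := by exact_mod_cast hd0
      have hsub : d ^ (a-1) ≤ X / d + 1 := by
        have hda : d ^ a ≤ X := (hdX d hd1).mpr hdN
        have hdd : d^(a-1) ≤ X / d := by
          rw [Nat.le_div_iff_mul_le hd0]
          calc d^(a-1) * d = d^a := by rw [← pow_succ]; congr 1; omega
            _ ≤ X := hda
        omega
      rw [Nat.cast_sub hsub]
      have hmod := Nat.div_add_mod X d
      have hcast : (d:ℝ) * ((X/d : ℕ):ℝ) + ((X % d : ℕ):ℝ) = (X:ℝ) := by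
        exact_mod_cast congrArg (Nat.cast : ℕ → ℝ) hmod
      have hdiv : ((X/d : ℕ):ℝ) = ((X:ℝ) - ((X % d : ℕ):ℝ))/(d:ℝ) := by
        field_simp
        linarith [hcast]
      push_cast [hdiv]
      field_simp
    rw [Finset.sum_congr rfl e2]
    have e3 : ∑ d ∈ Finset.Icc 1 N, ((X:ℝ)*(d:ℝ)⁻¹ - ((X % d : ℕ):ℝ)/(d:ℝ) + 1 - (d:ℝ)^(a-1))
        = (X:ℝ)*H - R + ((Finset.Icc 1 N).card : ℝ) - P := by
      rw [hHdef, hRdef, hPdef, Finset.mul_sum]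
      simp only [Finset.sum_sub_distrib, Finset.sum_add_distrib, Finset.sum_const,
        nsmul_eq_mul, mul_one]
    rw [e3, Nat.card_Icc, Nat.add_sub_cancel]
  have hHh : (harmonic N : ℝ) = H := by
    have h0 : harmonic N = ∑ i ∈ Finset.Icc 1 N, ((i:ℚ))⁻¹ := harmonic_eq_sum_Icc
    rw [hHdef]
    calc (harmonic N : ℝ) = ((∑ i ∈ Finset.Icc 1 N, ((i:ℚ))⁻¹ : ℚ) : ℝ) := by rw [h0]
      _ = _ := by push_cast; rfl
  -- basic real facts
  have hlogy : Real.log y = (a:ℝ)⁻¹ * Real.log x := by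
    rw [hy]
    exact Real.log_rpow hx0 _
  have hyx : y ≤ x := by
    rw [hy]
    calc x ^ ((a:ℝ)⁻¹) ≤ x ^ (1:ℝ) :=
          Real.rpow_le_rpow_of_exponent_le hx1 (by
            rw [inv_le_one_iff₀]
            right
            linarith)
      _ = x := Real.rpow_one x
  have hxy2 : x = y^(a-2) * y^2 := by
    rw [← hya, ← pow_add]
    congr 1
    omega
  have hxy1 : x = y^(a-1) * y := by
    rw [← hya, ← pow_succ]
    congr 1
    omega
  have hyy1 : y^(a-1) = y^(a-2) * y := by
    rw [← pow_succ]
    congr 1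
    omega
  have hNid : (N:ℝ)^a = (N:ℝ)^(a-1) * (N:ℝ) := by
    rw [← pow_succ]
    congr 1
    omega
  -- the six pieces
  set B1 : ℝ := (X:ℝ) * (H - Real.log N - γ - 1/(2*(N:ℝ))) with hB1def
  set B2 : ℝ := ((X:ℝ) - x) * (Real.log N + γ) with hB2def
  set B3 : ℝ := x * (Real.log N - Real.log y) + (y^a - (N:ℝ)^a)/(a:ℝ) with hB3def
  set B4 : ℝ := ((X:ℝ) - (N:ℝ)^a)/(2*(N:ℝ)) with hB4def
  set B5 : ℝ := -(P - ((N:ℝ)^a/(a:ℝ) + (N:ℝ)^(a-1)/2)) with hB5def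
  set B6 : ℝ := (N:ℝ) - R with hB6def
  clear_value H R P B1 B2 B3 B4 B5 B6
  have hid : (X:ℝ)*H - R + (N:ℝ) - P - ((1/(a:ℝ))*x*Real.log x + (γ - 1/(a:ℝ))*x)
      = B1 + B2 + B3 + B4 + B5 + B6 := by
    have hxlog : (1/(a:ℝ))*x*Real.log x = x * Real.log y := by
      rw [hlogy]
      ring
    rw [hB1def, hB2def, hB3def, hB4def, hB5def, hB6def, hxlog, hya, hNid]
    field_simp
    ring
  -- bound B1
  have hb1 : |B1| ≤ 36 * y^(a-2) := by
    have h1 : |H - Real.log N - γ - 1/(2*(N:ℝ))| ≤ 9/(N:ℝ)^2 := by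
      rw [← hHh]
      exact harmonic_est N hN2
    rw [hB1def, abs_mul, abs_of_nonneg (Nat.cast_nonneg X)]
    have h2 : (X:ℝ) * |H - Real.log N - γ - 1/(2*(N:ℝ))| ≤ x * (9/(N:ℝ)^2) :=
      mul_le_mul hXx h1 (abs_nonneg _) hx0.le
    refine h2.trans ?_
    have hyp : (0:ℝ) ≤ y^(a-2) := pow_nonneg hy0.le _
    have hq : y^2 ≤ 4*(N:ℝ)^2 := by
      have h5 := pow_le_pow_left₀ hy0.le hy2N 2
      calc y^2 ≤ (2*(N:ℝ))^2 := h5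
        _ = 4*(N:ℝ)^2 := by ring
    calc x*(9/(N:ℝ)^2) = 9*y^(a-2)*(y^2/(N:ℝ)^2) := by rw [hxy2]; ring
      _ ≤ 9*y^(a-2)*4 := by
          apply mul_le_mul_of_nonneg_left _ (mul_nonneg (by norm_num) hyp)
          rw [div_le_iff₀ (by positivity)]
          linarith
      _ = 36*y^(a-2) := by ring
  -- bound B2
  have hb2 : |B2| ≤ Real.log x + 1 := by
    have hXxabs : |(X:ℝ) - x| ≤ 1 := abs_le.mpr ⟨by linarith, by linarith⟩
    have hN1R : (1:ℝ) ≤ (N:ℝ) := by linarith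
    have hlogN0 : 0 ≤ Real.log N := Real.log_nonneg hN1R
    have hlogNx : Real.log N ≤ Real.log x := Real.log_le_log hN0R (hNy.trans hyx)
    rw [hB2def, abs_mul]
    calc |(X:ℝ) - x| * |Real.log N + γ| ≤ 1 * (Real.log x + 1) := by
          apply mul_le_mul hXxabs _ (abs_nonneg _) (by norm_num)
          rw [abs_of_nonneg (by linarith)]
          linarith
      _ = Real.log x + 1 := one_mul _
  -- bound B3
  have hb3 : |B3| ≤ 2*(a:ℝ)*y^(a-2) := by
    obtain ⟨hl3, hu3⟩ := pow_sub_pow_bounds hN0R.le hNy a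
    have hD0 : 0 ≤ y - (N:ℝ) := by linarith
    have hD1 : y - (N:ℝ) ≤ 1 := by linarith
    have hlog1 : Real.log y - Real.log N ≤ (y - N)/(N:ℝ) := by
      have h := Real.log_le_sub_one_of_pos (show 0 < y/(N:ℝ) by positivity)
      rw [Real.log_div hy0.ne' hN0R.ne'] at h
      have e : y/(N:ℝ) - 1 = (y - N)/(N:ℝ) := by
        field_simp
      linarith
    have hlog2 : (y - N)/y ≤ Real.log y - Real.log N := by
      have h := Real.log_le_sub_one_of_pos (show 0 < (N:ℝ)/y by positivity)
      rw [Real.log_div hN0R.ne' hy0.ne'] at h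
      have e : (N:ℝ)/y - 1 = -((y - N)/y) := by
        field_simp
        ring
      linarith
    have hS0 : 0 ≤ y^a - (N:ℝ)^a := by
      have := pow_le_pow_left₀ hN0R.le hNy a
      linarith
    have hupper : B3 ≤ 0 := by
      have t1 : x * ((y - N)/y) ≤ x * (Real.log y - Real.log N) :=
        mul_le_mul_of_nonneg_left hlog2 hx0.le
      have t2 : x * ((y - N)/y) = y^(a-1) * (y - N) := by
        rw [hxy1]
        field_simp
      have t3 : (y^a - (N:ℝ)^a)/(a:ℝ) ≤ y^(a-1) * (y - N) := by
        rw [div_le_iff₀ haR0]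
        linarith [hu3]
      rw [hB3def]
      linarith [t1, t2, t3]
    have hlower : -(2*(a:ℝ)*y^(a-2)) ≤ B3 := by
      have t1 : x * (Real.log y - Real.log N) ≤ x * ((y - N)/(N:ℝ)) :=
        mul_le_mul_of_nonneg_left hlog1 hx0.le
      have t2 : 0 ≤ (y^a - (N:ℝ)^a)/(a:ℝ) := by positivity
      -- x*(y-N)/N ≤ 2*a*y^(a-2) + N^(a-1)*(y-N)??? use:
      -- x*(y-N)/N - N^(a-1)*(y-N) = (y-N)*(x - N^a)/N ≤ (x - N^a)/N ≤ a*y^(a-1)/N ≤ 2a*y^(a-2)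
      have t3 : x * ((y - N)/(N:ℝ)) - (N:ℝ)^(a-1)*(y - N) = (y - N)*((x - (N:ℝ)^a)/(N:ℝ)) := by
        rw [hNid]
        field_simp
      have t4 : x - (N:ℝ)^a ≤ (a:ℝ)*y^(a-1) := by
        have hyp1 : (0:ℝ) ≤ (a:ℝ)*y^(a-1) := mul_nonneg haR0.le (pow_nonneg hy0.le _)
        have hprod : 0 ≤ ((a:ℝ)*y^(a-1)) * (1 - (y - (N:ℝ))) := mul_nonneg hyp1 (by linarith)
        linarith [hu3, hya, hprod]
      have t5 : (y - N)*((x - (N:ℝ)^a)/(N:ℝ)) ≤ (x - (N:ℝ)^a)/(N:ℝ) := by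
        have hnum : 0 ≤ (x - (N:ℝ)^a)/(N:ℝ) := by
          apply div_nonneg _ hN0R.le
          have := pow_le_pow_left₀ hN0R.le hNy a
          linarith [hya]
        linarith [mul_nonneg (by linarith : (0:ℝ) ≤ 1 - (y - (N:ℝ))) hnum]
      have t6 : (x - (N:ℝ)^a)/(N:ℝ) ≤ 2*(a:ℝ)*y^(a-2) := by
        rw [div_le_iff₀ hN0R]
        have h1 : (a:ℝ)*y^(a-1) ≤ 2*(a:ℝ)*y^(a-2)*(N:ℝ) := by
          rw [hyy1]
          have hprod2 : 0 ≤ ((a:ℝ)*y^(a-2)) * (2*(N:ℝ) - y) :=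
            mul_nonneg (mul_nonneg haR0.le (pow_nonneg hy0.le _)) (by linarith)
          linarith [hprod2]
        linarith
      have t7 : (N:ℝ)^(a-1)*(y - N) ≤ (y^a - (N:ℝ)^a)/(a:ℝ) := by
        rw [le_div_iff₀ haR0]
        linarith [hl3]
      rw [hB3def]
      linarith [t1, t3, t5, t6, t7]
    rw [abs_le]
    constructor <;> [linarith; linarith [pow_nonneg hy0.le (a-2)]]
  -- bound B4
  have hb4 : |B4| ≤ (a:ℝ)*2^(a-1)*y^(a-2) := by
    have h0 : 0 ≤ (X:ℝ) - (N:ℝ)^a := by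
      have : ((N^a : ℕ):ℝ) ≤ (X:ℝ) := by exact_mod_cast hNaX
      push_cast at this
      linarith
    obtain ⟨_, hup⟩ := pow_sub_pow_bounds (show (0:ℝ) ≤ (N:ℝ) by positivity)
      (show (N:ℝ) ≤ (N:ℝ)+1 by linarith) a
    have h1 : (X:ℝ) - (N:ℝ)^a ≤ (a:ℝ)*((N:ℝ)+1)^(a-1) := by
      have : ((N:ℝ)+1)^a - (N:ℝ)^a ≤ (a:ℝ)*((N:ℝ)+1)^(a-1) := by
        linarith [hup]
      linarith [hXN1a]
    have h2 : ((N:ℝ)+1)^(a-1) ≤ (2*(N:ℝ))^(a-1) :=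
      pow_le_pow_left₀ (by positivity) (by linarith) _
    have h3 : (2*(N:ℝ))^(a-1) = 2^(a-1)*(N:ℝ)^(a-1) := mul_pow 2 (N:ℝ) (a-1)
    have hNyp : (N:ℝ)^(a-1) ≤ y^(a-1) := pow_le_pow_left₀ hN0R.le hNy _
    rw [hB4def, abs_of_nonneg (by positivity)]
    rw [div_le_iff₀ (by positivity)]
    have h4 : (a:ℝ)*2^(a-1)*y^(a-2)*(2*(N:ℝ)) ≥ (a:ℝ)*2^(a-1)*y^(a-2)*y := by
      have hc : (0:ℝ) ≤ (a:ℝ)*2^(a-1)*y^(a-2) :=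
        mul_nonneg (mul_nonneg haR0.le (by positivity)) (pow_nonneg hy0.le _)
      linarith [mul_nonneg hc (by linarith : (0:ℝ) ≤ 2*(N:ℝ) - y)]
    have h5 : (a:ℝ)*2^(a-1)*y^(a-2)*y = (a:ℝ)*2^(a-1)*y^(a-1) := by
      rw [hyy1]
      ring
    have h6 : (a:ℝ)*((N:ℝ)+1)^(a-1) ≤ (a:ℝ)*2^(a-1)*y^(a-1) := by
      have h8 := h2.trans (le_of_eq h3)
      have h7 : (2:ℝ)^(a-1)*(N:ℝ)^(a-1) ≤ 2^(a-1)*y^(a-1) :=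
        mul_le_mul_of_nonneg_left hNyp (by positivity)
      calc (a:ℝ)*((N:ℝ)+1)^(a-1) ≤ (a:ℝ)*(2^(a-1)*y^(a-1)) :=
            mul_le_mul_of_nonneg_left (h8.trans h7) haR0.le
        _ = (a:ℝ)*2^(a-1)*y^(a-1) := by ring
    linarith
  -- bound B5
  have hb5 : |B5| ≤ Cpow (a-1) * y^(a-2) := by
    have h := powsum_est (a-1) (by omega) N (by omega)
    rw [show (a-1)+1 = a by omega, show (a-1)-1 = a-2 by omega] at h
    rw [show ((a-1 : ℕ):ℝ) + 1 = (a:ℝ) by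
      rw [Nat.cast_sub ha1]
      ring] at h
    rw [hB5def, abs_neg]
    rw [hPdef]
    refine h.trans ?_
    have h9 : (N:ℝ)^(a-2) ≤ y^(a-2) := pow_le_pow_left₀ hN0R.le hNy _
    exact mul_le_mul_of_nonneg_left h9 (Cpow_nonneg (a-1))
  -- bound B6
  have hb6 : |B6| ≤ y := by
    have hR0 : 0 ≤ R := by
      rw [hRdef]
      apply Finset.sum_nonneg
      intro d hd
      positivity
    have hRN : R ≤ (N:ℝ) := by
      rw [hRdef]
      calc ∑ d ∈ Finset.Icc 1 N, ((X % d : ℕ):ℝ)/(d:ℝ) ≤ ∑ d ∈ Finset.Icc 1 N, (1:ℝ) := by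
            apply Finset.sum_le_sum
            intro d hd
            obtain ⟨hd1, _⟩ := Finset.mem_Icc.mp hd
            have hd0 : 0 < d := hd1
            have hdR : (0:ℝ) < (d:ℝ) := by exact_mod_cast hd0
            rw [div_le_one hdR]
            have : X % d < d := Nat.mod_lt X hd0
            exact_mod_cast this.le
        _ = (N:ℝ) := by
            rw [Finset.sum_const, Nat.card_Icc, Nat.add_sub_cancel, nsmul_eq_mul, mul_one]
    rw [hB6def, abs_le]
    constructor
    · linarith
    · linarith
  -- final combination
  have hexp1 : y^(a-2) = x^(1 - 2/(a:ℝ)) := by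
    rw [← Real.rpow_natCast y (a-2), hy, ← Real.rpow_mul hx0.le]
    congr 1
    rw [Nat.cast_sub (by omega : 2 ≤ a)]
    field_simp
    norm_num
  have hy23 : y ≤ x^((2:ℝ)/3 + ε) := by
    rw [hy]
    apply Real.rpow_le_rpow_of_exponent_le hx1
    have h3 : (a:ℝ)⁻¹ ≤ 1/3 := by
      rw [inv_le_comm₀ haR0 (by norm_num)]
      linarith
    linarith
  have hx23pos : (0:ℝ) < x^((2:ℝ)/3+ε) := Real.rpow_pos_of_pos hx0 _
  have hx12pos : (0:ℝ) < x^(1 - 2/(a:ℝ)) := Real.rpow_pos_of_pos hx0 _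
  have hlogxb : Real.log x + 1 ≤ 4*x^((2:ℝ)/3+ε) := by
    have h13 := Real.log_le_sub_one_of_pos (show (0:ℝ) < x^((1:ℝ)/3) from Real.rpow_pos_of_pos hx0 _)
    rw [Real.log_rpow hx0] at h13
    have h14 : x^((1:ℝ)/3) ≤ x^((2:ℝ)/3+ε) := Real.rpow_le_rpow_of_exponent_le hx1 (by linarith)
    linarith
  have hb2' : |B2| ≤ 4*x^((2:ℝ)/3+ε) := hb2.trans hlogxb
  have hb6' : |B6| ≤ x^((2:ℝ)/3+ε) := hb6.trans hy23
  have habs6 : |B1+B2+B3+B4+B5+B6| ≤ |B1|+|B2|+|B3|+|B4|+|B5|+|B6| :=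
    calc |B1+B2+B3+B4+B5+B6| ≤ |B1+B2+B3+B4+B5| + |B6| := abs_add_le _ _
      _ ≤ (|B1+B2+B3+B4| + |B5|) + |B6| := by gcongr; exact abs_add_le _ _
      _ ≤ ((|B1+B2+B3| + |B4|) + |B5|) + |B6| :=
          by gcongr; exact abs_add_le _ _
      _ ≤ (((|B1+B2| + |B3|) + |B4|) + |B5|) + |B6| :=
          by gcongr; exact abs_add_le _ _
      _ ≤ ((((|B1| + |B2|) + |B3|) + |B4|) + |B5|) + |B6| :=
          by gcongr; exact abs_add_le _ _
  have hsum : |B1|+|B2|+|B3|+|B4|+|B5|+|B6|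
      ≤ (36 + 2*(a:ℝ) + (a:ℝ)*2^(a-1) + Cpow (a-1))*x^(1-2/(a:ℝ)) + 5*x^((2:ℝ)/3+ε) :=
    calc |B1|+|B2|+|B3|+|B4|+|B5|+|B6|
        ≤ 36*y^(a-2) + 4*x^((2:ℝ)/3+ε) + 2*(a:ℝ)*y^(a-2) + (a:ℝ)*2^(a-1)*y^(a-2)
            + Cpow (a-1)*y^(a-2) + x^((2:ℝ)/3+ε) :=
          add_le_add (add_le_add (add_le_add (add_le_add (add_le_add hb1 hb2') hb3) hb4) hb5) hb6'
      _ = (36 + 2*(a:ℝ) + (a:ℝ)*2^(a-1) + Cpow (a-1))*y^(a-2) + 5*x^((2:ℝ)/3+ε) := by ring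
      _ = (36 + 2*(a:ℝ) + (a:ℝ)*2^(a-1) + Cpow (a-1))*x^(1-2/(a:ℝ)) + 5*x^((2:ℝ)/3+ε) := by
          rw [hexp1]
  have hfin : (36 + 2*(a:ℝ) + (a:ℝ)*2^(a-1) + Cpow (a-1))*x^(1-2/(a:ℝ)) + 5*x^((2:ℝ)/3+ε)
      ≤ (36 + 2*(a:ℝ) + (a:ℝ)*2^(a-1) + Cpow (a-1) + 5) * (x^(1-2/(a:ℝ)) + x^((2:ℝ)/3+ε)) := by
    have hC := Cpow_nonneg (a-1)
    have h1 : (0:ℝ) ≤ (a:ℝ)*2^(a-1) := by positivity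
    have p1 : 0 ≤ (36 + 2*(a:ℝ) + (a:ℝ)*2^(a-1) + Cpow (a-1)) * x^((2:ℝ)/3+ε) :=
      mul_nonneg (by linarith) hx23pos.le
    have p2 : (0:ℝ) ≤ 5 * x^(1-2/(a:ℝ)) := by positivity
    calc (36 + 2*(a:ℝ) + (a:ℝ)*2^(a-1) + Cpow (a-1))*x^(1-2/(a:ℝ)) + 5*x^((2:ℝ)/3+ε)
        ≤ (36 + 2*(a:ℝ) + (a:ℝ)*2^(a-1) + Cpow (a-1))*x^(1-2/(a:ℝ)) + 5*x^((2:ℝ)/3+ε)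
          + ((36 + 2*(a:ℝ) + (a:ℝ)*2^(a-1) + Cpow (a-1)) * x^((2:ℝ)/3+ε)
            + 5 * x^(1-2/(a:ℝ))) := le_add_of_nonneg_right (by positivity)
      _ = (36 + 2*(a:ℝ) + (a:ℝ)*2^(a-1) + Cpow (a-1) + 5) * (x^(1-2/(a:ℝ)) + x^((2:ℝ)/3+ε)) := by
          ring
  rw [Real.norm_eq_abs, Real.norm_eq_abs, hT, hid,
    abs_of_pos (show (0:ℝ) < x^(1 - 2/(a:ℝ)) + x^((2:ℝ)/3+ε) by positivity)]
  exact habs6.trans (hsum.trans hfin)
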